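/- In a trim lattice L with left modular labelling γ, an element y lies in the interval L_1 = [0̂, m_1] if and only if 1 is an upward label of y, i.e., there is a cover y ⋖ z with γ(y ⋖ z) = 1. -/

import Mathlib

/-- An element `x` of a lattice is *left modular* if `(y ⊔ x) ⊓ z = y ⊔ (x ⊓ z)`
for all `y ≤ z`. -/
def LeftModular {L : Type*} [Lattice L] (x : L) : Prop :=
  ∀ y z : L, y ≤ z → (y ⊔ x) ⊓ z = y ⊔ (x ⊓ z)

/-- The data of an extremal lattice of length `n` together with a fixed
maximal-length chain `x₀ ⋖ ⋯ ⋖ xₙ` and the induced numberings of the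
join-irreducibles `j₁, …, jₙ` and meet-irreducibles `m₁, …, mₙ`. -/
structure ExtremalChainData (L : Type*) [Lattice L] [Fintype L] [BoundedOrder L]
    (n : ℕ) where
  x : Fin (n + 1) → L
  x_strictMono : StrictMono x
  x_bot : x 0 = ⊥
  x_top : x (Fin.last n) = ⊤
  maxlen : ∀ (m : ℕ) (c : Fin (m + 1) → L), StrictMono c → m ≤ n
  j : Fin n → L
  m : Fin n → L
  j_irr : ∀ i, SupIrred (j i)
  m_irr : ∀ i, InfIrred (m i)
  j_inj : Function.Injective j
  m_inj : Function.Injective m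
  j_surj : ∀ a : L, SupIrred a → a ∈ Set.range j
  m_surj : ∀ a : L, InfIrred a → a ∈ Set.range m
  x_eq_sup : ∀ i : Fin (n + 1),
    x i = (Finset.univ.filter fun k : Fin n => (k : ℕ) < (i : ℕ)).sup j
  x_eq_inf : ∀ i : Fin (n + 1),
    x i = (Finset.univ.filter fun k : Fin n => (i : ℕ) ≤ (k : ℕ)).inf m

namespace ExtremalChainData

variable {L : Type*} [Lattice L] [Fintype L] [BoundedOrder L] {n : ℕ}

/-- `x_J`: the set of indices of join-irreducibles lying below `a`. -/
def setJ (D : ExtremalChainData L n) (a : L) : Set (Fin n) := {i | D.j i ≤ a}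

/-- `x_M`: the set of indices of meet-irreducibles lying above `a`. -/
def setM (D : ExtremalChainData L n) (a : L) : Set (Fin n) := {i | a ≤ D.m i}

/-- The Galois graph: a directed edge `i → k` when `jᵢ ≰ m_k` and `i ≠ k`. -/
def galoisEdge (D : ExtremalChainData L n) (i k : Fin n) : Prop :=
  ¬ D.j i ≤ D.m k ∧ i ≠ k

/-- The left modular labelling: `i` is the label of the cover `y ⋖ z` iff `i` is
minimal with `y ⊔ (xᵢ ⊓ z) = z`. -/
def IsLabel (D : ExtremalChainData L n) (y z : L) (i : Fin n) : Prop :=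
  y ⊔ (D.x i.succ ⊓ z) = z ∧ ∀ k : Fin n, y ⊔ (D.x k.succ ⊓ z) = z → i ≤ k

open scoped Classical in
/-- `D^γ(a)`: the set of labels of cover relations below `a`. -/
noncomputable def downLabels (D : ExtremalChainData L n) (a : L) : Finset (Fin n) :=
  Finset.univ.filter fun i => ∃ y, y ⋖ a ∧ D.IsLabel y a i

open scoped Classical in
/-- `U^γ(a)`: the set of labels of cover relations above `a`. -/
noncomputable def upLabels (D : ExtremalChainData L n) (a : L) : Finset (Fin n) :=
  Finset.univ.filter fun i => ∃ z, a ⋖ z ∧ D.IsLabel a z i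

/-- The fixed chain consists of left modular elements, i.e. the lattice is trim. -/
def IsTrim (D : ExtremalChainData L n) : Prop := ∀ i, LeftModular (D.x i)

end ExtremalChainData

open ExtremalChainData

/-- In a trim lattice, an element `y` lies in `L₁ = [⊥, m₁]` iff `1` is an
upward label of `y`, i.e. some cover `y ⋖ z` has label `1`. -/
theorem mem_L1_iff_up_label_one {L : Type*} [Lattice L] [Fintype L] [BoundedOrder L]
    {n : ℕ} (D : ExtremalChainData L n) (hD : D.IsTrim) (hn : 0 < n) :
    ∀ y : L, y ≤ D.m ⟨0, hn⟩ ↔ ∃ z, y ⋖ z ∧ D.IsLabel y z ⟨0, hn⟩ := by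
  classical
  set i0 : Fin n := ⟨0, hn⟩ with hi0
  set X : L := D.x i0.succ with hX
  -- X is the infimum of the mₖ for k ≠ i0
  have hX_le_m : ∀ k : Fin n, k ≠ i0 → X ≤ D.m k := by
    intro k hk
    have h1 : (1 : ℕ) ≤ (k : ℕ) := by
      rcases Nat.pos_of_ne_zero (fun h => hk (Fin.ext h)) with h
      exact h
    have := D.x_eq_inf i0.succ
    rw [hX, this]
    apply Finset.inf_le
    simp only [Finset.mem_filter, Finset.mem_univ, true_and, Fin.val_succ]
    have h2 : (i0 : ℕ) = 0 := rfl
    simp only [Fin.lt_def, Fin.le_def, h2]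
    omega
  -- ⊥ is the infimum of all mₖ
  have hbot : (Finset.univ.inf D.m : L) = ⊥ := by
    have := D.x_eq_inf 0
    rw [D.x_bot] at this
    rw [this]
    congr 1
    ext k
    simp
  have hXm0 : X ⊓ D.m i0 = ⊥ := by
    apply le_antisymm _ bot_le
    rw [← hbot]
    apply Finset.le_inf
    intro k _
    by_cases hk : k = i0
    · subst hk; exact inf_le_right
    · exact le_trans inf_le_left (hX_le_m k hk)
  have hXne : X ≠ ⊥ := by
    have h01 : (0 : Fin (n + 1)) < i0.succ := by
      simp [Fin.lt_def]
    have h2 := D.x_strictMono h01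
    rw [D.x_bot] at h2
    rw [← hX] at h2
    exact fun h => absurd (h ▸ h2) (lt_irrefl ⊥)
  intro y
  constructor
  · -- forward: y ≤ m₁ → exists cover with label 1
    intro hy
    have hXy : ¬ X ≤ y := by
      intro hXy
      have : X ≤ X ⊓ D.m i0 := le_inf le_rfl (hXy.trans hy)
      rw [hXm0] at this
      exact hXne (le_antisymm this bot_le)
    have hlt : y < y ⊔ X := left_lt_sup.2 hXy
    haveI : LocallyFiniteOrder L := Fintype.toLocallyFiniteOrder
    obtain ⟨z, hcov, hzle⟩ := exists_covBy_le_of_lt hlt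
    refine ⟨z, hcov, ?_, ?_⟩
    · have hlm := hD i0.succ y z hcov.le
      rw [← hX] at hlm
      rw [← hlm, inf_eq_right.2 hzle]
    · intro k _
      exact Fin.mk_le_of_le_val (Nat.zero_le _)
  · -- backward: cover with label 1 → y ≤ m₁
    rintro ⟨z, hcov, hlab, -⟩
    have hXy : ¬ X ≤ y := by
      intro hXy
      have : z ≤ y := by
        rw [← hlab]
        exact sup_le le_rfl (le_trans inf_le_left hXy)
      exact absurd (hcov.lt.trans_le this) (lt_irrefl y)
    obtain ⟨s, hs, hirr⟩ := exists_infIrred_decomposition y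
    by_cases hmem : ∃ b ∈ s, b = D.m i0
    · obtain ⟨b, hb, rfl⟩ := hmem
      calc y = s.inf id := hs.symm
        _ ≤ D.m i0 := Finset.inf_le hb
    · exfalso
      apply hXy
      rw [← hs]
      apply Finset.le_inf
      intro b hb
      obtain ⟨k, rfl⟩ := D.m_surj b (hirr hb)
      have hk : k ≠ i0 := fun h => hmem ⟨D.m k, hb, by rw [h]⟩
      exact hX_le_m k hk
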